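/- Let T' := min(G/(M−ℓ), B) (the state-dependent-optimal threshold) and suppose T' is a positive integer. Then the worst-case overall competitive ratio of the symmetric threshold policy with threshold T' is f_OV(T') = 2 + (D − (M−ℓ))/G if G ≤ (M−ℓ)B; f_OV(T') = (D + (M−ℓ)(2B−1))/G if (M−ℓ)B < G ≤ D + (M−ℓ)B; and f_OV(T') = 1 + (M−ℓ)(B−1)/(D + (M−ℓ)B) if G > D + (M−ℓ)B, where f_OV(T) := (D + (M−ℓ)(T−1) + min(G,(M−ℓ)B))/min(D + (M−ℓ)·min(T,B), G). -/

import Mathlib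

/-- The worst-case overall competitive ratio of the symmetric threshold policy with the
state-dependent-optimal threshold `T' = min(G/(M-ℓ), B)`, in the three regimes of `G`. -/
theorem stmt7 (M B G ℓ : ℕ) (hM : 2 ≤ M) (hB : 1 ≤ B)
    (hBG : B < G) (hGMB : G < M * B) (hℓ : ℓ ≤ M - 1)
    (N : ℕ → ℕ) (hN0 : N 0 = 0)
    (hNpos : ∀ n, 1 ≤ n → n ≤ ℓ → 0 < N n)
    (hNmono : ∀ i j, 1 ≤ i → i ≤ j → j ≤ ℓ → N i ≤ N j)
    (D : ℕ) (hD : D = ∑ n ∈ Finset.Icc 1 ℓ, N n)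
    (fOV : ℕ → ℝ)
    (hfOV : ∀ T : ℕ, fOV T =
      ((D + (M - ℓ) * (T - 1) + min G ((M - ℓ) * B) : ℕ) : ℝ) /
      ((min (D + (M - ℓ) * min T B) G : ℕ) : ℝ))
    (T' : ℕ) (hTpos : 0 < T')
    (hT' : (T' : ℝ) = min ((G : ℝ) / ((M : ℝ) - (ℓ : ℝ))) (B : ℝ)) :
    (G ≤ (M - ℓ) * B →
      fOV T' = 2 + ((D : ℝ) - ((M : ℝ) - (ℓ : ℝ))) / (G : ℝ)) ∧
    ((M - ℓ) * B < G → G ≤ D + (M - ℓ) * B →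
      fOV T' = ((D : ℝ) + ((M : ℝ) - (ℓ : ℝ)) * (2 * (B : ℝ) - 1)) / (G : ℝ)) ∧
    (D + (M - ℓ) * B < G →
      fOV T' = 1 + ((M : ℝ) - (ℓ : ℝ)) * ((B : ℝ) - 1) /
        ((D : ℝ) + ((M : ℝ) - (ℓ : ℝ)) * (B : ℝ))) := by
  have hℓM : ℓ < M := by omega
  set k := M - ℓ with hk
  have hk1 : 1 ≤ k := by omega
  have hkR : ((k : ℕ) : ℝ) = (M : ℝ) - (ℓ : ℝ) := by
    rw [hk, Nat.cast_sub (le_of_lt hℓM)]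
  have hkpos : (0 : ℝ) < (k : ℝ) := by exact_mod_cast hk1
  have hGpos : (0 : ℝ) < (G : ℝ) := by
    have : 0 < G := by omega
    exact_mod_cast this
  rw [← hkR] at hT'
  -- T' = B in the case k*B < G
  have hTB : k * B < G → T' = B := by
    intro h
    have hBle : (B : ℝ) ≤ (G : ℝ) / (k : ℝ) := by
      rw [le_div_iff₀ hkpos]
      have : (↑(k * B) : ℝ) < (G : ℝ) := by exact_mod_cast h
      push_cast at this
      nlinarith
    have : (T' : ℝ) = (B : ℝ) := by rw [hT', min_eq_right hBle]
    exact_mod_cast this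
  refine ⟨?_, ?_, ?_⟩
  · -- case G ≤ k * B
    intro hG
    have hGk : (G : ℝ) / (k : ℝ) ≤ (B : ℝ) := by
      rw [div_le_iff₀ hkpos]
      have : (G : ℝ) ≤ (↑(k * B) : ℝ) := by exact_mod_cast hG
      push_cast at this
      nlinarith
    have hT'eq : (T' : ℝ) = (G : ℝ) / (k : ℝ) := by rw [hT', min_eq_left hGk]
    have hkT' : k * T' = G := by
      have : ((k * T' : ℕ) : ℝ) = (G : ℝ) := by
        push_cast
        rw [hT'eq, mul_div_cancel₀ _ (ne_of_gt hkpos)]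
      exact_mod_cast this
    have hT'B : T' ≤ B := by
      have : (T' : ℝ) ≤ (B : ℝ) := by rw [hT'eq]; exact hGk
      exact_mod_cast this
    have hkG : k ≤ G := by nlinarith [hkT', hTpos]
    have hsub : k * (T' - 1) = G - k := by
      obtain ⟨t, rfl⟩ : ∃ t, T' = t + 1 := ⟨T' - 1, by omega⟩
      rw [Nat.mul_succ] at hkT'
      simp only [Nat.add_sub_cancel]
      omega
    rw [hfOV, hsub, min_eq_left hG, min_eq_left hT'B, hkT',
      min_eq_right (Nat.le_add_left G D)]
    have : ((D + (G - k) + G : ℕ) : ℝ) = (D : ℝ) + ((G : ℝ) - (k : ℝ)) + G := by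
      push_cast [hkG]; ring
    rw [this, ← hkR]
    field_simp
    ring
  · intro hkBG hGle
    rw [hfOV, hTB hkBG, min_eq_right (le_of_lt hkBG), min_self,
      min_eq_right hGle]
    have : ((D + k * (B - 1) + k * B : ℕ) : ℝ)
        = (D : ℝ) + (k : ℝ) * ((B : ℝ) - 1) + (k : ℝ) * B := by
      push_cast [hB]; ring
    rw [this, ← hkR]
    field_simp
    ring
  · intro hDG
    have hkBG : k * B < G := by omega
    have hden : 0 < D + k * B := by nlinarith
    rw [hfOV, hTB hkBG, min_eq_right (le_of_lt hkBG), min_self,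
      min_eq_left (le_of_lt hDG)]
    have h1 : ((D + k * (B - 1) + k * B : ℕ) : ℝ)
        = (D : ℝ) + (k : ℝ) * ((B : ℝ) - 1) + (k : ℝ) * B := by
      push_cast [hB]; ring
    have h2 : ((D + k * B : ℕ) : ℝ) = (D : ℝ) + (k : ℝ) * B := by push_cast; ring
    have hdenR : (0 : ℝ) < (D : ℝ) + (k : ℝ) * B := by
      have : (0 : ℝ) < ((D + k * B : ℕ) : ℝ) := by exact_mod_cast hden
      rwa [h2] at this
    rw [h1, h2, ← hkR]
    field_simp
    ring
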